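/- For all natural numbers k and n with 0 < k, k < n and k * n even, there exists a connected k-regular simple graph on n vertices (for k ≥ 2; for k = 1 and n = 2 the single edge is connected). -/

import Mathlib

open SimpleGraph Finset
open Fin.NatCast Fin.CommRing

theorem stmt_2 (k n : ℕ) (hk : 0 < k) (hkn : k < n) (heven : Even (k * n))
    (hconn : 2 ≤ k ∨ n = 2) :
    ∃ G : SimpleGraph (Fin n),
      G.Connected ∧ ∀ v : Fin n, Nat.card (G.neighborSet v) = k := by
  obtain ⟨N, rfl⟩ : ∃ N, n = N + 2 := ⟨n - 2, by omega⟩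
  obtain ⟨m, hm1, hm2⟩ : ∃ m, 2 * m ≤ k ∧ k ≤ 2 * m + 1 := ⟨k / 2, by omega, by omega⟩
  have hmo : k % 2 = 1 → (N + 2) % 2 = 0 := by
    rcases Nat.even_mul.mp heven with h' | h' <;> rw [Nat.even_iff] at h' <;> omega
  set I : Finset ℕ :=
    (Finset.Icc 1 m ∪ Finset.Icc (N + 2 - m) (N + 1)) ∪
      (if k % 2 = 1 then {(N + 2) / 2} else ∅) with hI
  have hmemI : ∀ j, j ∈ I ↔
      (1 ≤ j ∧ j ≤ m) ∨ (N + 2 - m ≤ j ∧ j ≤ N + 1) ∨ (k % 2 = 1 ∧ j = (N + 2) / 2) := by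
    intro j
    by_cases h : k % 2 = 1 <;>
      simp [hI, h, Finset.mem_union, Finset.mem_Icc, or_assoc] <;> tauto
  have hbound : ∀ j ∈ I, 1 ≤ j ∧ j ≤ N + 1 := by
    intro j hj
    rcases (hmemI j).mp hj with h | h | h
    · omega
    · omega
    · have := hmo h.1; omega
  set D : Finset (Fin (N + 2)) := I.image (fun j : ℕ => (j : Fin (N + 2))) with hD
  have hval : ∀ j ∈ I, ((j : Fin (N + 2))).val = j := by
    intro j hj
    exact Fin.val_cast_of_lt (by have := hbound j hj; omega)
  have hcardD : D.card = k := by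
    rw [hD, Finset.card_image_of_injOn (fun a ha b hb hab => by
      rw [← hval a (Finset.mem_coe.mp ha), ← hval b (Finset.mem_coe.mp hb), hab])]
    rw [hI]
    rw [Finset.card_union_of_disjoint, Finset.card_union_of_disjoint]
    · rw [Nat.card_Icc, Nat.card_Icc]
      by_cases h : k % 2 = 1 <;> simp [h] <;> omega
    · rw [Finset.disjoint_left]
      intro a ha hb
      simp only [Finset.mem_Icc] at ha hb
      omega
    · rw [Finset.disjoint_left]
      intro a ha hb
      by_cases h : k % 2 = 1
      · have h2 := hmo h
        simp only [Finset.mem_union, Finset.mem_Icc, h, if_true,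
          Finset.mem_singleton] at ha hb
        omega
      · simp [h] at hb
  have hzero : ∀ d ∈ D, d ≠ 0 := by
    intro d hd
    rw [hD, Finset.mem_image] at hd
    obtain ⟨j, hj, rfl⟩ := hd
    intro h
    have h1 := hval j hj
    rw [h, Fin.val_zero] at h1
    have := hbound j hj
    omega
  have hsymm : ∀ d ∈ D, -d ∈ D := by
    intro d hd
    rw [hD, Finset.mem_image] at hd ⊢
    obtain ⟨j, hj, rfl⟩ := hd
    have hb := hbound j hj
    refine ⟨N + 2 - j, ?_, ?_⟩
    · rcases (hmemI j).mp hj with h | h | h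
      · exact (hmemI _).mpr (Or.inr (Or.inl (by omega)))
      · exact (hmemI _).mpr (Or.inl (by omega))
      · have := hmo h.1
        exact (hmemI _).mpr (Or.inr (Or.inr ⟨h.1, by omega⟩))
    · have key : ((N + 2 - j : ℕ) : Fin (N + 2)) + (j : Fin (N + 2)) = 0 := by
        rw [← Nat.cast_add, (show N + 2 - j + j = N + 2 by omega), Fin.natCast_self]
      exact eq_neg_of_add_eq_zero_left key
  refine ⟨circulantGraph (D : Set (Fin (N + 2))), ?_, ?_⟩
  · have h1D : (1 : Fin (N + 2)) ∈ D := by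
      rw [hD, Finset.mem_image]
      refine ⟨1, ?_, by simp⟩
      rcases hconn with h | h
      · exact (hmemI 1).mpr (Or.inl ⟨le_refl 1, by omega⟩)
      · exact (hmemI 1).mpr (Or.inr (Or.inr (by omega)))
    have hle : cycleGraph (N + 2) ≤ circulantGraph (D : Set (Fin (N + 2))) := by
      intro u v h
      rw [cycleGraph_adj] at h
      refine ⟨fun he => ?_, ?_⟩
      · rcases h with h | h <;> rw [he, sub_self] at h <;> exact hzero 1 h1D h.symm
      · rcases h with h | h
        · exact Or.inl (by show u - v ∈ (D : Set (Fin (N + 2))); rw [h]; exact Finset.mem_coe.mpr h1D)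
        · exact Or.inr (by show v - u ∈ (D : Set (Fin (N + 2))); rw [h]; exact Finset.mem_coe.mpr h1D)
    exact cycleGraph_connected.mono hle
  · intro v
    have hns : (circulantGraph (D : Set (Fin (N + 2)))).neighborSet v
        = (fun d => v + d) '' (D : Set (Fin (N + 2))) := by
      ext w
      simp only [mem_neighborSet, circulantGraph_adj, Set.mem_image, Finset.mem_coe]
      constructor
      · rintro ⟨hne, h | h⟩
        · exact ⟨w - v, by simpa using hsymm _ h, by ring⟩
        · exact ⟨w - v, h, by ring⟩
      · rintro ⟨d, hd, rfl⟩
        refine ⟨fun he => hzero d hd ?_, Or.inr (by simpa using hd)⟩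
        have h2 : v + d - v = v - v := by rw [← he]
        simpa using h2
    rw [hns, Nat.card_coe_set_eq, Set.ncard_image_of_injective _ (add_right_injective v),
      Set.ncard_coe_finset, hcardD]
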